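/- Let p ∈ {2, 3}, a ∈ F_{p^n}^×, and E(a) the elliptic curve associated to a (y² + xy = x³ + a if p = 2; y² = x³ + x² − a if p = 3), so that #E(a)(F_{p^n}) = p^n + K_{p^n}(a). Then for 1 ≤ h ≤ n: p^h divides K_{p^n}(a) if and only if E(a)(F_{p^n}) contains a point of order p^h. -/

import Mathlib

open WeierstrassCurve

/-- The elliptic curve associated to `a`: `y² + xy = x³ + a` if `p = 2`,
and `y² = x³ + x² - a` if `p = 3`. -/
noncomputable def Ekl (p n : ℕ) [Fact p.Prime] (a : GaloisField p n) :
    WeierstrassCurve.Affine (GaloisField p n) :=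
  if p = 2 then { a₁ := 1, a₂ := 0, a₃ := 0, a₄ := 0, a₆ := a }
  else { a₁ := 0, a₂ := 1, a₃ := 0, a₄ := 0, a₆ := -a }

open scoped Classical in
/-- The Kloosterman sum `K_{p^n}(a) = 1 + ∑_{x ∈ 𝔽_{p^n}^×} ζ^{Tr(x⁻¹ + ax)}`,
where `ζ` is a (primitive `p`-th) root of unity in `ℂ` and `Tr` is the absolute trace. -/
noncomputable def Kl (p n : ℕ) [Fact p.Prime] (ζ : ℂ) (a : GaloisField p n) : ℂ :=
  letI : Fintype (GaloisField p n) := Fintype.ofFinite _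
  1 + ∑ x ∈ Finset.univ \ {(0 : GaloisField p n)},
    ζ ^ (Algebra.trace (ZMod p) (GaloisField p n) (x⁻¹ + a * x)).val

section PointAux

open WeierstrassCurve.Affine

variable {F : Type*} [Field F] {W : WeierstrassCurve.Affine F}

private def pointMap : W.Point → Option (F × F)
  | .zero => none
  | @Point.some _ _ _ x y _ => .some (x, y)

private lemma pointMap_inj : Function.Injective (pointMap (W := W)) := by
  intro P Q hPQ
  cases P with
  | zero =>
    cases Q with
    | zero => rfl
    | some h2 => simp [pointMap] at hPQ
  | some h1 =>
    cases Q with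
    | zero => simp [pointMap] at hPQ
    | some h2 =>
      simp only [pointMap, Option.some.injEq, Prod.mk.injEq] at hPQ
      obtain ⟨rfl, rfl⟩ := hPQ
      rfl

private def pointMap' : W.Point → F × F × Bool
  | .zero => (0, 0, false)
  | @Point.some _ _ _ x y _ => (x, y, true)

private lemma pointMap'_inj : Function.Injective (pointMap' (W := W)) := by
  intro P Q hPQ
  cases P with
  | zero =>
    cases Q with
    | zero => rfl
    | some h2 => simp [pointMap'] at hPQ
  | some h1 =>
    cases Q with
    | zero => simp [pointMap'] at hPQ
    | some h2 =>
      simp only [pointMap', Prod.mk.injEq] at hPQ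
      obtain ⟨rfl, rfl, -⟩ := hPQ
      rfl

instance instFinitePoint [Finite F] : Finite W.Point :=
  Finite.of_injective _ pointMap'_inj

private lemma some_eq_some_iff {x1 y1 x2 y2 : F} {h1 : W.Nonsingular x1 y1}
    {h2 : W.Nonsingular x2 y2} :
    Point.some _ _ h1 = Point.some _ _ h2 ↔ x1 = x2 ∧ y1 = y2 := by
  constructor
  · intro h
    have := congrArg pointMap h
    simpa [pointMap] using this
  · rintro ⟨rfl, rfl⟩
    rfl

end PointAux

section TorsAux

private def torsK (q : ℕ) (G : Type*) [AddCommGroup G] : AddSubgroup G where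
  carrier := {x | q • x = 0}
  zero_mem' := smul_zero q
  add_mem' {a b} ha hb := by
    simp only [Set.mem_setOf_eq] at *
    rw [smul_add, ha, hb, add_zero]
  neg_mem' {a} ha := by
    simp only [Set.mem_setOf_eq] at *
    rw [smul_neg, ha, neg_zero]

private lemma mem_torsK {q : ℕ} {G : Type*} [AddCommGroup G] {x : G} :
    x ∈ torsK q G ↔ q • x = 0 := Iff.rfl

private lemma card_torsK_eq (q : ℕ) (G : Type*) [AddCommGroup G] :
    Nat.card (torsK q G) = ({x : G | q • x = 0}).ncard := by
  rw [← Nat.card_coe_set_eq]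
  exact Nat.card_congr (Equiv.subtypeEquivRight fun x => Iff.rfl)

private lemma card_le_of_addSubgroup_le {G : Type*} [AddGroup G] [Finite G]
    {H K : AddSubgroup G} (h : H ≤ K) : Nat.card H ≤ Nat.card K := by
  refine Nat.card_le_card_of_injective (fun x => ⟨x.1, h x.2⟩) ?_
  intro a b hab
  have h1 := congrArg Subtype.val hab
  exact Subtype.ext h1

private lemma card_torsK_mul (p q : ℕ) (G : Type*) [AddCommGroup G] [Finite G] :
    Nat.card (torsK (p * q) G) ≤ Nat.card (torsK q G) * Nat.card (torsK p G) := by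
  set H := torsK (p * q) G
  let ψ : H →+ G := AddMonoidHom.mk' (fun x : H => p • (x : G)) (fun a b => smul_add p _ _)
  have key : Nat.card H = Nat.card ψ.range * Nat.card ψ.ker := by
    rw [AddSubgroup.card_eq_card_quotient_mul_card_addSubgroup ψ.ker,
      Nat.card_congr (QuotientAddGroup.quotientKerEquivRange ψ).toEquiv]
  rw [key]
  apply Nat.mul_le_mul
  · have hle : ψ.range ≤ torsK q G := by
      rintro _ ⟨x, rfl⟩
      show q • (p • (x : G)) = 0
      rw [← mul_nsmul]
      exact x.2
    exact card_le_of_addSubgroup_le hle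
  · have hker : ∀ y : ψ.ker, ((y : H) : G) ∈ torsK p G := fun y => y.2
    refine Nat.card_le_card_of_injective
      (fun y : ψ.ker => (⟨((y : H) : G), hker y⟩ : torsK p G)) ?_
    intro a b hab
    have h1 := congrArg Subtype.val hab
    exact Subtype.ext (Subtype.ext h1)

private lemma card_torsK_pow (p : ℕ) (G : Type*) [AddCommGroup G] [Finite G]
    (h1 : Nat.card (torsK p G) ≤ p) (k : ℕ) : Nat.card (torsK (p ^ k) G) ≤ p ^ k := by
  induction k with
  | zero =>
    simp only [pow_zero]
    have hall : ∀ x : torsK 1 G, x = 0 := by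
      intro x
      apply Subtype.ext
      have := x.2
      rwa [mem_torsK, one_smul] at this
    have : Nat.card (torsK 1 G) ≤ Nat.card (Fin 1) :=
      Nat.card_le_card_of_injective (fun _ => (0 : Fin 1))
        (fun a b _ => by rw [hall a, hall b])
    simpa using this
  | succ k ih =>
    calc Nat.card (torsK (p ^ (k + 1)) G) = Nat.card (torsK (p * p ^ k) G) := by
          rw [pow_succ']
      _ ≤ Nat.card (torsK (p ^ k) G) * Nat.card (torsK p G) := card_torsK_mul ..
      _ ≤ p ^ k * p := Nat.mul_le_mul ih h1
      _ = p ^ (k + 1) := (pow_succ p k).symm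

private lemma exists_addOrderOf_pow (G : Type*) [AddCommGroup G] [Finite G] (p : ℕ)
    (hp : p.Prime) (htor : Nat.card (torsK p G) ≤ p) {h : ℕ} (hdvd : p ^ h ∣ Nat.card G) :
    ∃ x : G, addOrderOf x = p ^ h := by
  have hp1 : 1 < p := hp.one_lt
  set m := Nat.card G with hm
  set K := torsK (p ^ m) G with hK
  have hmem : ∀ (x : G) (k : ℕ), p ^ k • x = 0 → x ∈ K := by
    intro x k hx
    obtain ⟨j, hjk, hj⟩ := (Nat.dvd_prime_pow hp).mp (addOrderOf_dvd_of_nsmul_eq_zero hx)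
    have hjm : p ^ j ≤ p ^ m := by
      have h1 : p ^ j ∣ m := hj ▸ addOrderOf_dvd_natCard x
      have h2 : p ^ j ≤ m := Nat.le_of_dvd Nat.card_pos h1
      exact h2.trans (Nat.le_of_lt (Nat.lt_pow_self (n := m) hp1))
    rw [mem_torsK, ← addOrderOf_dvd_iff_nsmul_eq_zero, hj]
    exact pow_dvd_pow p ((Nat.pow_le_pow_iff_right hp1).mp hjm)
  have hq : ¬ p ∣ Nat.card (G ⧸ K) := by
    intro hdvdq
    letI : Fintype (G ⧸ K) := Fintype.ofFinite (G ⧸ K)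
    haveI : Fact p.Prime := ⟨hp⟩
    obtain ⟨y, hy⟩ := exists_prime_addOrderOf_dvd_card (G := G ⧸ K) p
      (by rwa [← Nat.card_eq_fintype_card])
    obtain ⟨x, rfl⟩ := QuotientAddGroup.mk'_surjective K y
    have h1 : p • QuotientAddGroup.mk' K x = 0 := by
      rw [← hy]; exact addOrderOf_nsmul_eq_zero _
    rw [← map_nsmul, QuotientAddGroup.mk'_apply, QuotientAddGroup.eq_zero_iff] at h1
    have h2 : x ∈ K := by
      apply hmem x (m + 1)
      rw [pow_succ', mul_nsmul]
      exact h1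
    have h3 : QuotientAddGroup.mk' K x = 0 := by
      rw [QuotientAddGroup.mk'_apply, QuotientAddGroup.eq_zero_iff]
      exact h2
    rw [h3, addOrderOf_zero] at hy
    exact hp.one_lt.ne hy
  have hcardK : p ^ h ∣ Nat.card K := by
    have hcard := AddSubgroup.card_eq_card_quotient_mul_card_addSubgroup K
    rw [hm, hcard] at hdvd
    have hcop : (Nat.Coprime (p ^ h) (Nat.card (G ⧸ K))) :=
      Nat.Coprime.pow_left h (hp.coprime_iff_not_dvd.mpr hq)
    exact hcop.dvd_of_dvd_mul_left hdvd
  obtain ⟨x₀, hx₀⟩ := Finite.exists_max (fun x : K => addOrderOf (x : G))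
  obtain ⟨M, hMm, hM⟩ := (Nat.dvd_prime_pow hp).mp
    (addOrderOf_dvd_of_nsmul_eq_zero (mem_torsK.mp x₀.2))
  have hsub : ∀ x : K, p ^ M • (x : G) = 0 := by
    intro x
    obtain ⟨j, hjm, hj⟩ := (Nat.dvd_prime_pow hp).mp
      (addOrderOf_dvd_of_nsmul_eq_zero (mem_torsK.mp x.2))
    have hle : p ^ j ≤ p ^ M := by rw [← hj, ← hM]; exact hx₀ x
    rw [← addOrderOf_dvd_iff_nsmul_eq_zero, hj]
    exact pow_dvd_pow p ((Nat.pow_le_pow_iff_right hp1).mp hle)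
  have hcardle : Nat.card K ≤ p ^ M := by
    have hle : K ≤ torsK (p ^ M) G := fun x hx => hsub ⟨x, hx⟩
    exact le_trans (card_le_of_addSubgroup_le hle) (card_torsK_pow p G htor M)
  have hhM : h ≤ M := by
    have : p ^ h ≤ p ^ M := le_trans (Nat.le_of_dvd Nat.card_pos hcardK) hcardle
    exact (Nat.pow_le_pow_iff_right hp1).mp this
  refine ⟨p ^ (M - h) • (x₀ : G), ?_⟩
  rw [addOrderOf_nsmul, hM, Nat.gcd_eq_right (pow_dvd_pow p (Nat.sub_le M h)),
    Nat.pow_div (Nat.sub_le M h) hp.pos, Nat.sub_sub_self hhM]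

private lemma ncard_le_two {G : Type*} [AddCommGroup G] (S : Set G)
    (hS : ∀ x ∈ S, ∀ y ∈ S, x ≠ 0 → y ≠ 0 → x = y) : S.ncard ≤ 2 := by
  by_cases hE : ∃ z ∈ S, z ≠ 0
  · obtain ⟨z, hz, hz0⟩ := hE
    have hsub : S ⊆ {0, z} := by
      intro w hw
      by_cases hw0 : w = 0
      · exact Or.inl hw0
      · exact Or.inr (hS w hw z hz hw0 hz0)
    refine le_trans (Set.ncard_le_ncard hsub (Set.toFinite _)) ?_
    refine le_trans (Set.ncard_insert_le _ _) ?_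
    simp [Set.ncard_singleton]
  · push_neg at hE
    have hsub : S ⊆ {0} := fun w hw => hE w hw
    refine le_trans (Set.ncard_le_ncard hsub (Set.toFinite _)) ?_
    simp [Set.ncard_singleton]

private lemma ncard_le_three {G : Type*} [AddCommGroup G] (S : Set G)
    (hS : ∀ x ∈ S, ∀ y ∈ S, x ≠ 0 → y ≠ 0 → y = x ∨ y = -x) : S.ncard ≤ 3 := by
  by_cases hE : ∃ z ∈ S, z ≠ 0
  · obtain ⟨z, hz, hz0⟩ := hE
    have hsub : S ⊆ {0, z, -z} := by
      intro w hw
      by_cases hw0 : w = 0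
      · exact Or.inl hw0
      · rcases hS z hz w hw hz0 hw0 with h | h
        · exact Or.inr (Or.inl h)
        · exact Or.inr (Or.inr h)
    refine le_trans (Set.ncard_le_ncard hsub (Set.toFinite _)) ?_
    refine le_trans (Set.ncard_insert_le _ _) ?_
    have := Set.ncard_insert_le z ({-z} : Set G)
    simp only [Set.ncard_singleton] at this ⊢
    omega
  · push_neg at hE
    have hsub : S ⊆ {0} := fun w hw => hE w hw
    refine le_trans (Set.ncard_le_ncard hsub (Set.toFinite _)) ?_
    simp [Set.ncard_singleton]

end TorsAux

section CurveTors

open WeierstrassCurve.Affine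

variable {F : Type*} [Field F] [DecidableEq F] {W : WeierstrassCurve.Affine F}

private lemma tors_char_two (hchar : (2 : F) = 0) (hW1 : W.a₁ = 1) (hW3 : W.a₃ = 0) :
    ∀ P Q : W.Point, 2 • P = 0 → 2 • Q = 0 → P ≠ 0 → Q ≠ 0 → P = Q := by
  have key : ∀ {x y : F} (h : W.Nonsingular x y), 2 • (Point.some _ _ h) = 0 →
      x = 0 ∧ y ^ 2 = W.a₆ := by
    intro x y h h2
    rw [two_nsmul] at h2
    by_cases hy : y = W.negY x y
    · rw [negY, hW1, hW3] at hy
      have hx : x = 0 := by linear_combination hy - y * hchar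
      refine ⟨hx, ?_⟩
      have heq := h.1
      rw [equation_iff, hW1, hW3, hx] at heq
      linear_combination heq
    · exfalso
      rw [Point.add_self_of_Y_ne hy] at h2
      exact Point.some_ne_zero _ h2
  intro P Q hP hQ hP0 hQ0
  cases P with
  | zero => exact absurd rfl hP0
  | @some x1 y1 h1 =>
    cases Q with
    | zero => exact absurd rfl hQ0
    | @some x2 y2 h2 =>
      obtain ⟨hx1, hy1⟩ := key h1 hP
      obtain ⟨hx2, hy2⟩ := key h2 hQ
      rw [some_eq_some_iff]
      refine ⟨hx1.trans hx2.symm, ?_⟩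
      have hz : (y1 - y2) ^ 2 = 0 := by
        linear_combination hy1 + hy2 + (W.a₆ - y1 * y2) * hchar
      exact sub_eq_zero.mp (pow_eq_zero_iff (n := 2) (by norm_num) |>.mp hz)

private lemma tors_char_three (hchar : (3 : F) = 0) (hW1 : W.a₁ = 0) (hW2 : W.a₂ = 1)
    (hW3 : W.a₃ = 0) (hW4 : W.a₄ = 0) :
    ∀ P Q : W.Point, 3 • P = 0 → 3 • Q = 0 → P ≠ 0 → Q ≠ 0 → Q = P ∨ Q = -P := by
  have key : ∀ {x y : F} (h : W.Nonsingular x y), 3 • (Point.some _ _ h) = 0 →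
      y ≠ 0 ∧ x ^ 2 = y ^ 2 ∧ x ^ 3 = -W.a₆ := by
    intro x y h h3
    have h3' : (Point.some _ _ h + Point.some _ _ h) + Point.some _ _ h = 0 := by
      rw [← two_nsmul, ← succ_nsmul]
      exact h3
    have hnegY : W.negY x y = -y := by rw [WeierstrassCurve.Affine.negY, hW1, hW3]; ring
    have hy0 : y ≠ 0 := by
      intro h0
      have hyy : y = W.negY x y := by rw [hnegY, h0, neg_zero]
      rw [Point.add_self_of_Y_eq hyy, zero_add] at h3'
      exact Point.some_ne_zero h h3'
    have hyne : y ≠ W.negY x y := by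
      rw [hnegY]
      intro hc
      exact hy0 (by linear_combination (-1 : F) * hc + y * hchar)
    refine ⟨hy0, ?_⟩
    rw [Point.add_self_of_Y_ne hyne] at h3'
    have hadd := eq_neg_of_add_eq_zero_left h3'
    rw [Point.neg_some, some_eq_some_iff] at hadd
    obtain ⟨hX, -⟩ := hadd
    have h2y : y - -y ≠ 0 := by
      intro hc
      exact hy0 (by linear_combination (-1 : F) * hc + y * hchar)
    have hs : W.slope x x y y = x / y := by
      rw [slope_of_Y_ne rfl hyne, hnegY, hW1, hW2, hW4]
      rw [div_eq_div_iff h2y hy0]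
      linear_combination (x ^ 2 * y) * hchar
    rw [hs] at hX
    simp only [WeierstrassCurve.Affine.addX, hW1, hW2] at hX
    have h1 : (x / y) ^ 2 = 1 := by linear_combination hX + x * hchar
    rw [div_pow, div_eq_one_iff_eq (pow_ne_zero 2 hy0)] at h1
    refine ⟨h1, ?_⟩
    have heq := h.1
    rw [equation_iff, hW1, hW2, hW3, hW4] at heq
    linear_combination -h1 - heq
  intro P Q hP hQ hP0 hQ0
  cases P with
  | zero => exact absurd rfl hP0
  | @some x1 y1 h1 =>
    cases Q with
    | zero => exact absurd rfl hQ0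
    | @some x2 y2 h2 =>
      obtain ⟨hy1, hsq1, hcb1⟩ := key h1 hP
      obtain ⟨hy2, hsq2, hcb2⟩ := key h2 hQ
      have hxeq : x2 = x1 := by
        have hz : (x2 - x1) ^ 3 = 0 := by
          linear_combination hcb2 - hcb1 + (x2 * x1 ^ 2 - x2 ^ 2 * x1) * hchar
        exact sub_eq_zero.mp (pow_eq_zero_iff (n := 3) (by norm_num) |>.mp hz)
      have hyy : (y2 - y1) * (y2 + y1) = 0 := by
        have hxz : x1 - x2 = 0 := sub_eq_zero.mpr hxeq.symm
        linear_combination hsq1 - hsq2 - (x1 + x2) * hxz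
      rcases mul_eq_zero.mp hyy with hy | hy
      · left
        rw [some_eq_some_iff]
        exact ⟨hxeq, sub_eq_zero.mp hy⟩
      · right
        rw [Point.neg_some, some_eq_some_iff]
        refine ⟨hxeq, ?_⟩
        rw [WeierstrassCurve.Affine.negY, hW1, hW3]
        linear_combination hy
  
end CurveTors

open scoped Classical in
/-- Let `p ∈ {2, 3}`, `a ∈ 𝔽_{p^n}ˣ`, and `E(a)` the associated elliptic
curve, so that `#E(a)(𝔽_{p^n}) = p^n + K_{p^n}(a)`. Then for `1 ≤ h ≤ n`:
`p^h` divides `K_{p^n}(a)` iff `E(a)(𝔽_{p^n})` contains a point of order `p^h`. -/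
theorem kloosterman_divisibility (p n : ℕ) [Fact p.Prime] (hp : p = 2 ∨ p = 3) (hn : 0 < n)
    (ζ : ℂ) (hζ : IsPrimitiveRoot ζ p) (a : GaloisField p n) (ha : a ≠ 0)
    (hcard : (Nat.card (Ekl p n a).Point : ℂ) = (p : ℂ) ^ n + Kl p n ζ a)
    (h : ℕ) (h1 : 1 ≤ h) (h2 : h ≤ n) :
    (∃ k : ℤ, Kl p n ζ a = (p : ℂ) ^ h * (k : ℂ)) ↔
      ∃ P : (Ekl p n a).Point, addOrderOf P = p ^ h := by
  have hKl : Kl p n ζ a = (Nat.card (Ekl p n a).Point : ℂ) - (p : ℂ) ^ n := by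
    rw [hcard]; ring
  have hpn : (p : ℂ) ^ n = (p : ℂ) ^ h * (p : ℂ) ^ (n - h) := by
    rw [← pow_add, Nat.add_sub_cancel' h2]
  have hdvd_iff : (∃ k : ℤ, Kl p n ζ a = (p : ℂ) ^ h * (k : ℂ)) ↔
      p ^ h ∣ Nat.card (Ekl p n a).Point := by
    constructor
    · rintro ⟨k, hk⟩
      have hC : ((Nat.card (Ekl p n a).Point : ℤ) : ℂ) =
          (((p : ℤ) ^ n + (p : ℤ) ^ h * k : ℤ) : ℂ) := by
        push_cast
        rw [← hk, hKl]
        ring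
      have hZ : (Nat.card (Ekl p n a).Point : ℤ) = (p : ℤ) ^ n + (p : ℤ) ^ h * k := by
        exact_mod_cast hC
      have hdvdZ : ((p : ℤ) ^ h) ∣ (Nat.card (Ekl p n a).Point : ℤ) := by
        rw [hZ]
        exact dvd_add ⟨(p : ℤ) ^ (n - h), by rw [← pow_add, Nat.add_sub_cancel' h2]⟩ ⟨k, rfl⟩
      exact_mod_cast hdvdZ
    · rintro ⟨c, hc⟩
      refine ⟨(c : ℤ) - (p : ℤ) ^ (n - h), ?_⟩
      rw [hKl, hc, hpn]
      push_cast
      ring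
  rw [hdvd_iff]
  constructor
  · intro hdvd
    apply exists_addOrderOf_pow (Ekl p n a).Point p Fact.out _ hdvd
    rcases hp with hp2 | hp3
    · -- p = 2
      subst hp2
      have hchar : (2 : GaloisField 2 n) = 0 := by
        have := CharP.cast_eq_zero (GaloisField 2 n) 2
        exact_mod_cast this
      have hW1 : (Ekl 2 n a).a₁ = 1 := by simp [Ekl]
      have hW3 : (Ekl 2 n a).a₃ = 0 := by simp [Ekl]
      rw [card_torsK_eq]
      exact ncard_le_two _ (fun x hx y hy hx0 hy0 =>
        tors_char_two hchar hW1 hW3 x y hx hy hx0 hy0)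
    · -- p = 3
      subst hp3
      have hchar : (3 : GaloisField 3 n) = 0 := by
        have := CharP.cast_eq_zero (GaloisField 3 n) 3
        exact_mod_cast this
      have hW1 : (Ekl 3 n a).a₁ = 0 := by simp [Ekl]
      have hW2 : (Ekl 3 n a).a₂ = 1 := by simp [Ekl]
      have hW3 : (Ekl 3 n a).a₃ = 0 := by simp [Ekl]
      have hW4 : (Ekl 3 n a).a₄ = 0 := by simp [Ekl]
      rw [card_torsK_eq]
      exact ncard_le_three _ (fun x hx y hy hx0 hy0 =>
        tors_char_three hchar hW1 hW2 hW3 hW4 x y hx hy hx0 hy0)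
  · rintro ⟨P, hP⟩
    rw [← hP]
    exact addOrderOf_dvd_natCard P
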